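/- Fix b₀ > 0, θ₀ = arctan b₀, δ, δ₀, α ∈ (0, 1), and L ≥ 4. Let Q = {y ∈ ℝ³ : y₁ > 0, y₃ > b₀y₁} and Q_L = Q ∩ {r < L} (r = √(y₁²+y₃²)). Let f ∈ H^{(1−δ,2−δ₀)}_{0,α}(Q) be 2π-periodic in y₂, and write f(r, θ, y₂) in cylindrical coordinates y₁ = r cos θ, y₃ = r sin θ. For m ≥ 1 set μ_m = (mπ/(π/2 − θ₀))², f_{m0}(r) = (1/(π(π/2 − θ₀)))·∫_{θ₀}^{π/2}∫₀^{2π} f(r, θ, y₂) cos(√μ_m (θ − θ₀)) dy₂ dθ, and R_{m0}(r) = −r^{√μ_m} L^{−2√μ_m} ∫₀^{L} η^{2√μ_m − 1} ( ∫_η^{L} ξ^{1 − √μ_m} f_{m0}(ξ) dξ ) dη − r^{−√μ_m} ∫₀^{r} η^{2√μ_m − 1} ( ∫_η^{L} ξ^{1 − √μ_m} f_{m0}(ξ) dξ ) dη. Then the series I₁(r, θ) = Σ_{m=1}^{∞} R_{m0}(r) cos(√μ_m (θ − θ₀)) converges absolutely for 0 < r ≤ L, and there is a constant C depending only on θ₀,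 δ, δ₀ (in particular independent of L and f) such that sup_{0<r≤1, θ∈[θ₀,π/2]} |I₁(r,θ)| + sup_{1<r≤L, θ∈[θ₀,π/2]} r^{−δ₀}|I₁(r,θ)| ≤ C·‖f‖^{(1−δ,2−δ₀)}_{0,α;Q}. -/

import Mathlib

noncomputable section

open Real Set Filter MeasureTheory Topology

/-- Points of `ℝ³` (Euclidean). -/
abbrev V3 : Type := EuclideanSpace ℝ (Fin 3)

/-- `r_x = √(x₁² + x₃²)`, the distance of `x` to the `x₂`-axis. -/
def rx (x : V3) : ℝ := Real.sqrt (x 0 ^ 2 + x 2 ^ 2)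

/-- The edge `{x₁ = x₃ = 0}` (the `x₂`-axis). -/
def edge : Set V3 := {x : V3 | x 0 = 0 ∧ x 2 = 0}

/-- The infinite wedge `Q = {y₁ > 0, y₃ > b₀y₁}`. -/
def wedgeQ (b₀ : ℝ) : Set V3 := {y : V3 | 0 < y 0 ∧ b₀ * y 0 < y 2}

/-- The truncated wedge `Q_L = Q ∩ {r < L}`. -/
def wedgeQL (b₀ L : ℝ) : Set V3 := {y ∈ wedgeQ b₀ | rx y < L}

/-- `Q̄ ∖ edge`, the natural regularity set for functions on the wedge. -/
def SQ (b₀ : ℝ) : Set V3 := closure (wedgeQ b₀) \ edge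

/-- `Q̄_L ∖ edge`. -/
def SL (b₀ L : ℝ) : Set V3 := closure (wedgeQL b₀ L) \ edge

/-- Partial derivative within `S` in the `i`-th coordinate direction. -/
def pdW (S : Set V3) (i : Fin 3) (u : V3 → ℝ) (x : V3) : ℝ :=
  fderivWithin ℝ u S x (EuclideanSpace.single i 1)

/-- Laplacian of `u` at `x` (derivatives taken within `S`). -/
def lapW (S : Set V3) (u : V3 → ℝ) (x : V3) : ℝ :=
  ∑ i : Fin 3, pdW S i (pdW S i u) x

/-- `2π`-periodicity in `y₂`, on the set `D`. -/
def Per2On (D : Set V3) (u : V3 → ℝ) : Prop :=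
  ∀ y ∈ D, u (y + EuclideanSpace.single 1 (2 * Real.pi)) = u y

/-- All weighted sup quantities entering `Σ_{j≤m}[u]^{(k,l)}_{j,0;D}` are `≤ M`
(derivatives taken within `S`). -/
def wsupLE (S : Set V3) (m : ℕ) (k l : ℝ) (D : Set V3) (u : V3 → ℝ) (M : ℝ) : Prop :=
  (∀ j : ℕ, j ≤ m → ∀ x ∈ D, 0 < rx x → rx x < 1 →
      rx x ^ max (k + j) 0 * ‖iteratedFDerivWithin ℝ j u S x‖ ≤ M) ∧
  (∀ j : ℕ, j ≤ m → ∀ x ∈ D, 1 < rx x →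
      rx x ^ (l + j) * ‖iteratedFDerivWithin ℝ j u S x‖ ≤ M)

/-- All quantities entering the weighted Hölder norm `‖u‖^{(k,l)}_{m,α;D}` are `≤ M`
(derivatives taken within `S`). -/
def wnormLE (S : Set V3) (m : ℕ) (α k l : ℝ) (D : Set V3) (u : V3 → ℝ) (M : ℝ) : Prop :=
  wsupLE S m k l D u M ∧
  (∀ x ∈ D, ∀ y ∈ D, 0 < min (rx x) (rx y) → min (rx x) (rx y) < 1 →
      min (rx x) (rx y) ^ max (k + m + α) 0 *
        ‖iteratedFDerivWithin ℝ m u S x - iteratedFDerivWithin ℝ m u S y‖ ≤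
        M * ‖x - y‖ ^ α) ∧
  (∀ x ∈ D, ∀ y ∈ D, 1 < min (rx x) (rx y) →
      min (rx x) (rx y) ^ (l + m + α) *
        ‖iteratedFDerivWithin ℝ m u S x - iteratedFDerivWithin ℝ m u S y‖ ≤
        M * ‖x - y‖ ^ α)

/-- Membership in the weighted Hölder space `H^{(k,l)}_{m,α}(D)`. -/
def memH (S : Set V3) (m : ℕ) (α k l : ℝ) (D : Set V3) (u : V3 → ℝ) : Prop :=
  ContDiffOn ℝ m u S ∧ ∃ M : ℝ, 0 ≤ M ∧ wnormLE S m α k l D u M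

/-- The point of `ℝ³` with cylindrical coordinates `(r, θ, y₂)`:
`(r cos θ, y₂, r sin θ)`. -/
def mk3 (a b c : ℝ) : V3 := (WithLp.equiv 2 (Fin 3 → ℝ)).symm ![a, b, c]

/-- `f` written in cylindrical coordinates: `f(r cos θ, y₂, r sin θ)`. -/
def fPolar (f : V3 → ℝ) (r θ y₂ : ℝ) : ℝ := f (mk3 (r * Real.cos θ) y₂ (r * Real.sin θ))

/-- `√μ_m = mπ/(π/2 − θ₀)`, where `θ₀ = arctan b₀`. -/
def sqrtmu (b₀ : ℝ) (m : ℕ) : ℝ := m * Real.pi / (Real.pi / 2 - Real.arctan b₀)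

/-- The Fourier coefficient `f_{m0}(r)` of `f` in the basis `cos(√μ_m(θ − θ₀))`. -/
def fm0 (b₀ : ℝ) (f : V3 → ℝ) (m : ℕ) (r : ℝ) : ℝ :=
  (Real.pi * (Real.pi / 2 - Real.arctan b₀))⁻¹ *
    ∫ θ in (Real.arctan b₀)..(Real.pi / 2), ∫ y₂ in (0:ℝ)..(2 * Real.pi),
      fPolar f r θ y₂ * Real.cos (sqrtmu b₀ m * (θ - Real.arctan b₀))

/-- The radial mode `R_{m0}(r)` of (4.24), solving
`R'' − r^{−2}μ_m R + r^{−1}R' = f_{m0}` with `R'(L) = 0` and `R` bounded at `r = 0`. -/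
def Rm0 (b₀ L : ℝ) (f : V3 → ℝ) (m : ℕ) (r : ℝ) : ℝ :=
  -(r ^ sqrtmu b₀ m * L ^ (-(2 * sqrtmu b₀ m)) *
      ∫ η in (0:ℝ)..L, η ^ (2 * sqrtmu b₀ m - 1) *
        ∫ ξ in η..L, ξ ^ (1 - sqrtmu b₀ m) * fm0 b₀ f m ξ) -
    r ^ (-sqrtmu b₀ m) *
      ∫ η in (0:ℝ)..r, η ^ (2 * sqrtmu b₀ m - 1) *
        ∫ ξ in η..L, ξ ^ (1 - sqrtmu b₀ m) * fm0 b₀ f m ξ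

lemma mk3_apply0 (a b c : ℝ) : mk3 a b c 0 = a := rfl
lemma mk3_apply1 (a b c : ℝ) : mk3 a b c 1 = b := rfl
lemma mk3_apply2 (a b c : ℝ) : mk3 a b c 2 = c := rfl

lemma rx_nonneg (x : V3) : 0 ≤ rx x := Real.sqrt_nonneg _

lemma rx_pos_of_mem {b₀ : ℝ} {x : V3} (hx : x ∈ wedgeQ b₀) : 0 < rx x := by
  have h : 0 < x 0 ^ 2 + x 2 ^ 2 := by nlinarith [hx.1, sq_nonneg (x 2)]
  exact Real.sqrt_pos.2 h

lemma continuous_rx : Continuous rx := by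
  have h0 : Continuous fun x : V3 => x 0 := (EuclideanSpace.proj (0 : Fin 3)).continuous
  have h2 : Continuous fun x : V3 => x 2 := (EuclideanSpace.proj (2 : Fin 3)).continuous
  exact Real.continuous_sqrt.comp ((h0.pow 2).add (h2.pow 2))

lemma rx_smul {t : ℝ} (ht : 0 ≤ t) (x : V3) : rx (t • x) = t * rx x := by
  simp only [rx, PiLp.smul_apply, smul_eq_mul]
  rw [show (t * x 0) ^ 2 + (t * x 2) ^ 2 = t ^ 2 * (x 0 ^ 2 + x 2 ^ 2) by ring,
    Real.sqrt_mul (sq_nonneg t), Real.sqrt_sq ht]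

lemma smul_mem_wedge {b₀ t : ℝ} (ht : 0 < t) {x : V3} (hx : x ∈ wedgeQ b₀) :
    t • x ∈ wedgeQ b₀ := by
  constructor
  · simp only [PiLp.smul_apply, smul_eq_mul]; exact mul_pos ht hx.1
  · simp only [PiLp.smul_apply, smul_eq_mul]
    have := hx.2; nlinarith

lemma wedge_subset_SQ {b₀ : ℝ} : wedgeQ b₀ ⊆ SQ b₀ := fun x hx =>
  ⟨subset_closure hx, fun he => absurd he.1 (ne_of_gt hx.1)⟩

lemma mem_SQ_of_closure {b₀ : ℝ} {x : V3} (hx : x ∈ closure (wedgeQ b₀)) (hr : 0 < rx x) :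
    x ∈ SQ b₀ := by
  refine ⟨hx, fun he => ?_⟩
  rw [rx, he.1, he.2] at hr; norm_num at hr

def wfun (δ δ₀ r : ℝ) : ℝ := (min r 1) ^ (δ - 1) * (max r 1) ^ (δ₀ - 2)

lemma wfun_nonneg {δ δ₀ r : ℝ} (hr : 0 ≤ r) : 0 ≤ wfun δ δ₀ r :=
  mul_nonneg (Real.rpow_nonneg (le_min hr zero_le_one) _)
    (Real.rpow_nonneg (le_trans zero_le_one (le_max_right r 1)) _)

lemma wfun_of_le_one {δ δ₀ r : ℝ} (hr : r ≤ 1) : wfun δ δ₀ r = r ^ (δ - 1) := by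
  rw [wfun, min_eq_left hr, max_eq_right hr, Real.one_rpow, mul_one]

lemma wfun_of_one_le {δ δ₀ r : ℝ} (hr : 1 ≤ r) : wfun δ δ₀ r = r ^ (δ₀ - 2) := by
  rw [wfun, min_eq_right hr, max_eq_left hr, Real.one_rpow, one_mul]

lemma wfun_one (δ δ₀ : ℝ) : wfun δ δ₀ 1 = 1 := by
  rw [wfun_of_le_one le_rfl, Real.one_rpow]

lemma wfun_continuousAt {δ δ₀ r : ℝ} (hr : 0 < r) : ContinuousAt (wfun δ δ₀) r := by
  have h1 : ContinuousAt (fun s : ℝ => (min s 1) ^ (δ - 1)) r :=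
    ((continuous_id.min continuous_const).continuousAt).rpow_const
      (Or.inl (ne_of_gt (lt_min hr one_pos)))
  have h2 : ContinuousAt (fun s : ℝ => (max s 1) ^ (δ₀ - 2)) r :=
    ((continuous_id.max continuous_const).continuousAt).rpow_const
      (Or.inl (ne_of_gt (lt_of_lt_of_le one_pos (le_max_right r 1))))
  exact h1.mul h2

lemma fbound {b₀ δ δ₀ Mf : ℝ} (hδ1 : δ < 1) (hδ₀1 : δ₀ < 1) {f : V3 → ℝ}
    (hc : ContinuousOn f (SQ b₀))
    (hw : wsupLE (SQ b₀) 0 (1 - δ) (2 - δ₀) (wedgeQ b₀) f Mf) :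
    ∀ x ∈ closure (wedgeQ b₀), 0 < rx x → |f x| ≤ Mf * wfun δ δ₀ (rx x) := by
  -- step 1 : small radius, x in wedge
  have step1 : ∀ x ∈ wedgeQ b₀, rx x < 1 → |f x| ≤ Mf * rx x ^ (δ - 1) := by
    intro x hx h1
    have hrp : 0 < rx x := rx_pos_of_mem hx
    have hb := hw.1 0 le_rfl x hx hrp h1
    rw [norm_iteratedFDerivWithin_zero, Real.norm_eq_abs] at hb
    have hmax : max ((1 - δ) + ((0:ℕ):ℝ)) 0 = 1 - δ := by
      rw [max_eq_left]; · norm_num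
      · push_cast; linarith
    rw [hmax] at hb
    have hpow : rx x ^ (δ - 1) * rx x ^ (1 - δ) = 1 := by
      rw [← Real.rpow_add hrp]; norm_num
    calc |f x| = rx x ^ (δ - 1) * (rx x ^ (1 - δ) * |f x|) := by
          rw [← mul_assoc, hpow, one_mul]
      _ ≤ rx x ^ (δ - 1) * Mf := by
          exact mul_le_mul_of_nonneg_left hb (Real.rpow_nonneg hrp.le _)
      _ = Mf * rx x ^ (δ - 1) := mul_comm _ _
  -- step 2 : large radius, x in wedge
  have step2 : ∀ x ∈ wedgeQ b₀, 1 < rx x → |f x| ≤ Mf * rx x ^ (δ₀ - 2) := by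
    intro x hx h1
    have hrp : 0 < rx x := rx_pos_of_mem hx
    have hb := hw.2 0 le_rfl x hx h1
    rw [norm_iteratedFDerivWithin_zero, Real.norm_eq_abs] at hb
    have h0 : (2 - δ₀) + ((0:ℕ):ℝ) = 2 - δ₀ := by push_cast; ring
    rw [h0] at hb
    have hpow : rx x ^ (δ₀ - 2) * rx x ^ (2 - δ₀) = 1 := by
      rw [← Real.rpow_add hrp]; norm_num
    calc |f x| = rx x ^ (δ₀ - 2) * (rx x ^ (2 - δ₀) * |f x|) := by
          rw [← mul_assoc, hpow, one_mul]
      _ ≤ rx x ^ (δ₀ - 2) * Mf :=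
          mul_le_mul_of_nonneg_left hb (Real.rpow_nonneg hrp.le _)
      _ = Mf * rx x ^ (δ₀ - 2) := mul_comm _ _
  -- step 3 : all of wedge
  have step3 : ∀ x ∈ wedgeQ b₀, |f x| ≤ Mf * wfun δ δ₀ (rx x) := by
    intro x hx
    have hrp : 0 < rx x := rx_pos_of_mem hx
    rcases lt_trichotomy (rx x) 1 with h1 | h1 | h1
    · rw [wfun_of_le_one h1.le]; exact step1 x hx h1
    · -- rx x = 1 : scaling limit
      rw [h1, wfun_one, mul_one]
      have hxSQ : x ∈ SQ b₀ := wedge_subset_SQ hx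
      have htend : Tendsto (fun t : ℝ => f (t • x)) (𝓝[<] (1:ℝ)) (𝓝 (f x)) := by
        have h1' : Tendsto (fun t : ℝ => t • x) (𝓝[<] (1:ℝ)) (𝓝 x) := by
          have : Tendsto (fun t : ℝ => t • x) (𝓝 (1:ℝ)) (𝓝 ((1:ℝ) • x)) :=
            (continuous_id.smul continuous_const).tendsto 1
          rw [one_smul] at this
          exact this.mono_left nhdsWithin_le_nhds
        have h2' : ∀ᶠ t : ℝ in 𝓝[<] (1:ℝ), (t • x) ∈ SQ b₀ := by
          filter_upwards [Ioo_mem_nhdsLT_of_mem (show (1:ℝ) ∈ Ioc (0:ℝ) 1 by norm_num)]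
            with t ht
          exact wedge_subset_SQ (smul_mem_wedge ht.1 hx)
        exact (hc x hxSQ).tendsto.comp
          (tendsto_nhdsWithin_of_tendsto_nhds_of_eventually_within _ h1' h2')
      have htend2 : Tendsto (fun t : ℝ => |f (t • x)|) (𝓝[<] (1:ℝ)) (𝓝 (|f x|)) :=
        htend.abs
      have hbnd : Tendsto (fun t : ℝ => Mf * t ^ (δ - 1)) (𝓝[<] (1:ℝ)) (𝓝 (Mf * 1)) := by
        have : ContinuousAt (fun t : ℝ => Mf * t ^ (δ - 1)) 1 :=
          continuousAt_const.mul (continuousAt_id.rpow_const (Or.inl one_ne_zero))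
        have := this.tendsto.mono_left (nhdsWithin_le_nhds (s := Iio (1:ℝ)))
        simpa using this
      have hev : ∀ᶠ t : ℝ in 𝓝[<] (1:ℝ), |f (t • x)| ≤ Mf * t ^ (δ - 1) := by
        filter_upwards [Ioo_mem_nhdsLT_of_mem (show (1:ℝ) ∈ Ioc (0:ℝ) 1 by norm_num)]
          with t ht
        have hmem := smul_mem_wedge ht.1 hx
        have hrs : rx (t • x) = t := by rw [rx_smul ht.1.le, h1, mul_one]
        have := step1 _ hmem (by rw [hrs]; exact ht.2)
        rwa [hrs] at this
      have := le_of_tendsto_of_tendsto htend2 hbnd hev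
      simpa using this
    · rw [wfun_of_one_le h1.le]; exact step2 x hx h1
  -- step 4 : closure
  intro x hx hrp
  obtain ⟨u, hu, hulim⟩ := mem_closure_iff_seq_limit.1 hx
  have hxSQ : x ∈ SQ b₀ := mem_SQ_of_closure hx hrp
  have htend : Tendsto (fun n => |f (u n)|) atTop (𝓝 (|f x|)) := by
    have : Tendsto u atTop (𝓝[SQ b₀] x) :=
      tendsto_nhdsWithin_of_tendsto_nhds_of_eventually_within _ hulim
        (Eventually.of_forall fun n => wedge_subset_SQ (hu n))
    exact ((hc x hxSQ).tendsto.comp this).abs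
  have hbnd : Tendsto (fun n => Mf * wfun δ δ₀ (rx (u n))) atTop
      (𝓝 (Mf * wfun δ δ₀ (rx x))) := by
    have h1 : Tendsto (fun n => rx (u n)) atTop (𝓝 (rx x)) :=
      (continuous_rx.tendsto x).comp hulim
    exact (tendsto_const_nhds.mul ((wfun_continuousAt hrp).tendsto.comp h1))
  exact le_of_tendsto_of_tendsto' htend hbnd fun n => step3 _ (hu n)

-- point of the closed wedge sector at radius r
lemma polar_mem_closure {b₀ : ℝ} (hb₀ : 0 < b₀) {r θ : ℝ} (hr : 0 ≤ r)
    (hθ1 : Real.arctan b₀ ≤ θ) (hθ2 : θ ≤ Real.pi / 2) (y₂ : ℝ) :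
    mk3 (r * Real.cos θ) y₂ (r * Real.sin θ) ∈ closure (wedgeQ b₀) := by
  set θ₀ := Real.arctan b₀ with hθ₀
  have hθ₀pos : 0 < θ₀ := by
    have := Real.arctan_strictMono hb₀; rwa [Real.arctan_zero] at this
  have hcosθ : 0 ≤ Real.cos θ :=
    Real.cos_nonneg_of_mem_Icc ⟨by linarith [Real.pi_pos], hθ2⟩
  have hcosθ₀ : 0 < Real.cos θ₀ := Real.cos_arctan_pos b₀
  -- sin θ ≥ b₀ cos θ
  have hsin : b₀ * Real.cos θ ≤ Real.sin θ := by
    have hs : 0 ≤ Real.sin (θ - θ₀) := by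
      apply Real.sin_nonneg_of_nonneg_of_le_pi (by linarith)
      have := Real.arctan_lt_pi_div_two b₀
      linarith [Real.pi_pos]
    rw [Real.sin_sub] at hs
    have hb : b₀ = Real.sin θ₀ / Real.cos θ₀ := by
      rw [← Real.tan_eq_sin_div_cos, hθ₀, Real.tan_arctan]
    rw [hb, div_mul_eq_mul_div, div_le_iff₀ hcosθ₀]
    nlinarith
  -- approximating sequence
  set p := mk3 (r * Real.cos θ) y₂ (r * Real.sin θ) with hp
  set e : V3 := mk3 1 0 (b₀ + 1) with he
  apply mem_closure_of_tendsto (f := fun n : ℕ => p + ((1:ℝ)/(n+1)) • e)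
    (b := atTop)
  · have h0 : Tendsto (fun n : ℕ => (1:ℝ)/(n+1)) atTop (𝓝 0) :=
      tendsto_one_div_add_atTop_nhds_zero_nat
    have := (h0.smul_const e).const_add p
    simpa using this
  · apply Eventually.of_forall
    intro n
    have hn : 0 < (1:ℝ)/(n+1) := by positivity
    constructor
    · show 0 < (p + ((1:ℝ)/(n+1)) • e) 0
      simp only [PiLp.add_apply, PiLp.smul_apply, smul_eq_mul, hp, he,
        mk3_apply0]
      nlinarith
    · show b₀ * (p + ((1:ℝ)/(n+1)) • e) 0 < (p + ((1:ℝ)/(n+1)) • e) 2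
      simp only [PiLp.add_apply, PiLp.smul_apply, smul_eq_mul, hp, he,
        mk3_apply0, mk3_apply2]
      nlinarith
lemma rx_polar {r θ : ℝ} (hr : 0 ≤ r) (y₂ : ℝ) :
    rx (mk3 (r * Real.cos θ) y₂ (r * Real.sin θ)) = r := by
  rw [rx, mk3_apply0, mk3_apply2,
    show (r * Real.cos θ) ^ 2 + (r * Real.sin θ) ^ 2 = r ^ 2 by
      nlinarith [Real.sin_sq_add_cos_sq θ],
    Real.sqrt_sq hr]

lemma fm0_bound {b₀ δ δ₀ Mf : ℝ} (hb₀ : 0 < b₀) (hMf : 0 ≤ Mf) {f : V3 → ℝ}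
    (hfb : ∀ x ∈ closure (wedgeQ b₀), 0 < rx x → |f x| ≤ Mf * wfun δ δ₀ (rx x))
    (m : ℕ) {r : ℝ} (hr : 0 < r) :
    |fm0 b₀ f m r| ≤ 2 * Mf * wfun δ δ₀ r := by
  set θ₀ := Real.arctan b₀ with hθ₀
  have hθ₀pos : 0 < θ₀ := by
    have := Real.arctan_strictMono hb₀; rwa [Real.arctan_zero] at this
  have hθ₀lt : θ₀ < Real.pi / 2 := Real.arctan_lt_pi_div_two b₀
  set W := Mf * wfun δ δ₀ r with hW
  have hWnn : 0 ≤ W := mul_nonneg hMf (wfun_nonneg hr.le)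
  have hpt : ∀ θ, θ₀ ≤ θ → θ ≤ Real.pi / 2 → ∀ y₂ : ℝ,
      ‖fPolar f r θ y₂ * Real.cos (sqrtmu b₀ m * (θ - θ₀))‖ ≤ W := by
    intro θ h1 h2 y₂
    have hmem := polar_mem_closure hb₀ hr.le h1 h2 y₂
    have hrx := rx_polar (θ := θ) hr.le y₂
    have := hfb _ hmem (by rw [hrx]; exact hr)
    rw [hrx] at this
    rw [Real.norm_eq_abs, abs_mul]
    calc |fPolar f r θ y₂| * |Real.cos (sqrtmu b₀ m * (θ - θ₀))|
        ≤ W * 1 := mul_le_mul this (Real.abs_cos_le_one _)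
          (abs_nonneg _) hWnn
      _ = W := mul_one W
  have hinner : ∀ θ, θ₀ ≤ θ → θ ≤ Real.pi / 2 →
      ‖∫ y₂ in (0:ℝ)..(2 * Real.pi),
        fPolar f r θ y₂ * Real.cos (sqrtmu b₀ m * (θ - θ₀))‖ ≤ W * (2 * Real.pi) := by
    intro θ h1 h2
    have H := intervalIntegral.norm_integral_le_of_norm_le_const
      (C := W) (f := fun y₂ => fPolar f r θ y₂ * Real.cos (sqrtmu b₀ m * (θ - θ₀)))
      (a := 0) (b := 2 * Real.pi) (fun y₂ _ => hpt θ h1 h2 y₂)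
    have habs : |2 * Real.pi - 0| = 2 * Real.pi := by
      rw [sub_zero]; exact abs_of_pos Real.two_pi_pos
    rw [habs] at H
    exact H
  have houter : ‖∫ θ in θ₀..(Real.pi / 2), ∫ y₂ in (0:ℝ)..(2 * Real.pi),
      fPolar f r θ y₂ * Real.cos (sqrtmu b₀ m * (θ - θ₀))‖
      ≤ W * (2 * Real.pi) * (Real.pi / 2 - θ₀) := by
    have := intervalIntegral.norm_integral_le_of_norm_le_const
      (C := W * (2 * Real.pi))
      (f := fun θ => ∫ y₂ in (0:ℝ)..(2 * Real.pi),
        fPolar f r θ y₂ * Real.cos (sqrtmu b₀ m * (θ - θ₀)))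
      (a := θ₀) (b := Real.pi / 2)
      (fun θ hθ => by
        rw [Set.uIoc_of_le hθ₀lt.le] at hθ
        exact hinner θ hθ.1.le hθ.2)
    rwa [abs_of_pos (by linarith)] at this
  have hcpos : (0:ℝ) < (Real.pi * (Real.pi / 2 - Real.arctan b₀))⁻¹ := by
    apply inv_pos.2
    have := Real.pi_pos
    nlinarith
  rw [fm0, abs_mul, abs_of_pos hcpos]
  calc (Real.pi * (Real.pi / 2 - Real.arctan b₀))⁻¹ *
      |∫ θ in θ₀..(Real.pi / 2), ∫ y₂ in (0:ℝ)..(2 * Real.pi),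
        fPolar f r θ y₂ * Real.cos (sqrtmu b₀ m * (θ - θ₀))|
      ≤ (Real.pi * (Real.pi / 2 - θ₀))⁻¹ * (W * (2 * Real.pi) * (Real.pi / 2 - θ₀)) := by
        apply mul_le_mul_of_nonneg_left _ hcpos.le
        exact houter
    _ = 2 * Mf * wfun δ δ₀ r := by
        have h3 : Real.pi * (Real.pi / 2 - θ₀) ≠ 0 := by
          have := Real.pi_pos; nlinarith
        have hkey : (Real.pi * (Real.pi / 2 - θ₀))⁻¹ * (W * (2 * Real.pi) * (Real.pi / 2 - θ₀))
            = 2 * W * ((Real.pi * (Real.pi / 2 - θ₀))⁻¹ * (Real.pi * (Real.pi / 2 - θ₀))) := by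
          ring
        rw [hkey, inv_mul_cancel₀ h3, mul_one, hW]
        ring

section Rm
variable {δ δ₀ ν L Mf : ℝ}

lemma Gb_contAt {a : ℝ} (hx : (0:ℝ) < a) :
    ContinuousAt (fun ξ : ℝ => (min ξ 1) ^ (δ - ν) * (max ξ 1) ^ (δ₀ - 1 - ν)) a := by
  have h1 : ContinuousAt (fun s : ℝ => (min s 1) ^ (δ - ν)) a :=
    ((continuous_id.min continuous_const).continuousAt).rpow_const
      (Or.inl (ne_of_gt (lt_min hx one_pos)))
  have h2 : ContinuousAt (fun s : ℝ => (max s 1) ^ (δ₀ - 1 - ν)) a :=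
    ((continuous_id.max continuous_const).continuousAt).rpow_const
      (Or.inl (ne_of_gt (lt_of_lt_of_le one_pos (le_max_right a 1))))
  exact h1.mul h2

lemma Rm0_bound_aux (hδ0 : 0 < δ) (hδ1 : δ < 1) (hδ₀0 : 0 < δ₀) (hδ₀1 : δ₀ < 1)
    (hMf : 0 ≤ Mf) (hν : 2 < ν) (hL : 4 ≤ L) (F : ℝ → ℝ)
    (hF : ∀ ξ : ℝ, 0 < ξ → |F ξ| ≤ 2 * Mf * wfun δ δ₀ ξ)
    {r : ℝ} (hr0 : 0 < r) (hrL : r ≤ L) :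
    |(-(r ^ ν * L ^ (-(2 * ν)) *
        ∫ η in (0:ℝ)..L, η ^ (2 * ν - 1) * ∫ ξ in η..L, ξ ^ (1 - ν) * F ξ) -
      r ^ (-ν) * ∫ η in (0:ℝ)..r, η ^ (2 * ν - 1) * ∫ ξ in η..L, ξ ^ (1 - ν) * F ξ)|
      ≤ 8 * Mf * (1 / (ν - δ - 1) + 1 / (ν - δ₀)) * (max r 1) ^ δ₀ / ν := by
  have hL1 : (1:ℝ) < L := by linarith
  have hL0 : (0:ℝ) < L := by linarith
  have hνδ : 0 < ν - δ - 1 := by linarith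
  have hνδ₀ : 0 < ν - δ₀ := by linarith
  have hν0 : 0 < ν := by linarith
  set cδ : ℝ := 1 / (ν - δ - 1) with hcδ
  set c₀ : ℝ := 1 / (ν - δ₀) with hc₀
  have hcδ0 : 0 < cδ := by rw [hcδ]; positivity
  have hc₀0 : 0 < c₀ := by rw [hc₀]; positivity
  set Gb : ℝ → ℝ := fun ξ => (min ξ 1) ^ (δ - ν) * (max ξ 1) ^ (δ₀ - 1 - ν) with hGb
  have hGbnn : ∀ ξ : ℝ, 0 ≤ ξ → 0 ≤ Gb ξ := fun ξ hξ =>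
    mul_nonneg (Real.rpow_nonneg (le_min hξ zero_le_one) _)
      (Real.rpow_nonneg (le_trans zero_le_one (le_max_right ξ 1)) _)
  have hGbint : ∀ a b : ℝ, 0 < a → 0 < b → IntervalIntegrable Gb volume a b := by
    intro a b ha hb
    apply ContinuousOn.intervalIntegrable
    intro ξ hξ
    have : 0 < ξ := lt_of_lt_of_le (lt_min ha hb) hξ.1
    exact (Gb_contAt this).continuousWithinAt
  -- pointwise bound on the inner integrand
  have hFG : ∀ ξ : ℝ, 0 < ξ → |ξ ^ (1 - ν) * F ξ| ≤ 2 * Mf * Gb ξ := by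
    intro ξ hξ
    have hid : ξ ^ (1 - ν) * wfun δ δ₀ ξ = Gb ξ := by
      rcases le_total ξ 1 with h | h
      · simp only [wfun, hGb, min_eq_left h, max_eq_right h, Real.one_rpow, mul_one]
        rw [← Real.rpow_add hξ, show 1 - ν + (δ - 1) = δ - ν by ring]
      · simp only [wfun, hGb, min_eq_right h, max_eq_left h, Real.one_rpow, one_mul]
        rw [← Real.rpow_add hξ, show 1 - ν + (δ₀ - 2) = δ₀ - 1 - ν by ring]
    rw [abs_mul, abs_of_nonneg (Real.rpow_nonneg hξ.le _)]
    calc ξ ^ (1 - ν) * |F ξ| ≤ ξ ^ (1 - ν) * (2 * Mf * wfun δ δ₀ ξ) :=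
          mul_le_mul_of_nonneg_left (hF ξ hξ) (Real.rpow_nonneg hξ.le _)
      _ = 2 * Mf * Gb ξ := by rw [← hid]; ring
  -- bound on the inner integral
  have hJ : ∀ η : ℝ, 0 < η → η ≤ L →
      |∫ ξ in η..L, ξ ^ (1 - ν) * F ξ| ≤
        2 * Mf * ((cδ + c₀) * ((min η 1) ^ (δ - ν + 1) * (max η 1) ^ (δ₀ - ν))) := by
    intro η hη hηL
    have hint := hGbint η L hη hL0
    have hae : ∀ᵐ ξ ∂(volume.restrict (Set.uIoc η L)), ‖ξ ^ (1 - ν) * F ξ‖ ≤ 2 * Mf * Gb ξ := by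
      rw [Set.uIoc_of_le hηL]
      exact (ae_restrict_iff' measurableSet_Ioc).2 (Eventually.of_forall fun ξ hξ => by
        rw [Real.norm_eq_abs]; exact hFG ξ (hη.trans hξ.1))
    have h1 := intervalIntegral.norm_integral_le_abs_of_norm_le hae (hint.const_mul (2 * Mf))
    rw [intervalIntegral.integral_const_mul, Real.norm_eq_abs] at h1
    have hIGnn : 0 ≤ ∫ ξ in η..L, Gb ξ :=
      intervalIntegral.integral_nonneg hηL fun ξ hξ => hGbnn ξ (hη.le.trans hξ.1)
    rw [abs_of_nonneg (mul_nonneg (by positivity) hIGnn)] at h1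
    refine h1.trans (mul_le_mul_of_nonneg_left ?_ (by positivity))
    -- ∫ Gb ≤ (cδ + c₀) * ...
    rcases le_or_gt η 1 with hη1 | hη1
    · have hs := (intervalIntegral.integral_add_adjacent_intervals
        (hGbint η 1 hη one_pos) (hGbint 1 L one_pos hL0)).symm
      have hI1 : (∫ ξ in η..(1:ℝ), Gb ξ) = ∫ ξ in η..(1:ℝ), ξ ^ (δ - ν) := by
        apply intervalIntegral.integral_congr
        intro ξ hξ
        rw [Set.uIcc_of_le hη1] at hξ
        simp only [hGb, min_eq_left hξ.2, max_eq_right hξ.2, Real.one_rpow, mul_one]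
      have hI1v : (∫ ξ in η..(1:ℝ), ξ ^ (δ - ν)) =
          (1 - η ^ (δ - ν + 1)) / (δ - ν + 1) := by
        rw [integral_rpow (Or.inr ⟨by intro h; linarith,
          by rw [Set.uIcc_of_le hη1]; intro h0; exact absurd h0.1 (not_le.2 hη)⟩)]
        rw [Real.one_rpow]
      have hI2 : (∫ ξ in (1:ℝ)..L, Gb ξ) = ∫ ξ in (1:ℝ)..L, ξ ^ (δ₀ - 1 - ν) := by
        apply intervalIntegral.integral_congr
        intro ξ hξ
        rw [Set.uIcc_of_le hL1.le] at hξ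
        simp only [hGb, min_eq_right hξ.1, max_eq_left hξ.1, Real.one_rpow, one_mul]
      have hI2v : (∫ ξ in (1:ℝ)..L, ξ ^ (δ₀ - 1 - ν)) =
          (L ^ (δ₀ - ν) - 1) / (δ₀ - ν) := by
        rw [integral_rpow (Or.inr ⟨by intro h; linarith,
          by rw [Set.uIcc_of_le hL1.le]; intro h0; have := h0.1; linarith⟩)]
        rw [Real.one_rpow, show δ₀ - 1 - ν + 1 = δ₀ - ν by ring]
      have hbd1 : (1 - η ^ (δ - ν + 1)) / (δ - ν + 1) ≤ cδ * η ^ (δ - ν + 1) := by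
        rw [div_le_iff_of_neg (show δ - ν + 1 < 0 by linarith)]
        have heq : cδ * η ^ (δ - ν + 1) * (δ - ν + 1) = -η ^ (δ - ν + 1) := by
          rw [hcδ]; field_simp; ring
        rw [heq]; linarith
      have hbd2 : (L ^ (δ₀ - ν) - 1) / (δ₀ - ν) ≤ c₀ := by
        rw [div_le_iff_of_neg (show δ₀ - ν < 0 by linarith)]
        have heq : c₀ * (δ₀ - ν) = -1 := by rw [hc₀]; field_simp; ring
        rw [heq]
        linarith [Real.rpow_nonneg hL0.le (δ₀ - ν)]
      have hη1p : 1 ≤ η ^ (δ - ν + 1) :=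
        Real.one_le_rpow_of_pos_of_le_one_of_nonpos hη hη1 (by linarith)
      rw [hs, hI1, hI1v, hI2, hI2v, min_eq_left hη1, max_eq_right hη1, Real.one_rpow,
        mul_one]
      have hkey : 0 ≤ c₀ * (η ^ (δ - ν + 1) - 1) :=
        mul_nonneg hc₀0.le (by linarith)
      nlinarith [hbd1, hbd2]
    · have hI : (∫ ξ in η..L, Gb ξ) = ∫ ξ in η..L, ξ ^ (δ₀ - 1 - ν) := by
        apply intervalIntegral.integral_congr
        intro ξ hξ
        rw [Set.uIcc_of_le hηL] at hξ
        have h1ξ : (1:ℝ) ≤ ξ := le_trans hη1.le hξ.1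
        simp only [hGb, min_eq_right h1ξ, max_eq_left h1ξ, Real.one_rpow, one_mul]
      have hIv : (∫ ξ in η..L, ξ ^ (δ₀ - 1 - ν)) =
          (L ^ (δ₀ - ν) - η ^ (δ₀ - ν)) / (δ₀ - ν) := by
        rw [integral_rpow (Or.inr ⟨by intro h; linarith,
          by rw [Set.uIcc_of_le hηL]; intro h0; have := h0.1; linarith⟩)]
        rw [show δ₀ - 1 - ν + 1 = δ₀ - ν by ring]
      have hbd : (L ^ (δ₀ - ν) - η ^ (δ₀ - ν)) / (δ₀ - ν) ≤ c₀ * η ^ (δ₀ - ν) := by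
        rw [div_le_iff_of_neg (show δ₀ - ν < 0 by linarith)]
        have heq : c₀ * η ^ (δ₀ - ν) * (δ₀ - ν) = -η ^ (δ₀ - ν) := by
          rw [hc₀]; field_simp; ring
        rw [heq]
        linarith [Real.rpow_nonneg hL0.le (δ₀ - ν)]
      rw [hI, hIv, min_eq_right hη1.le, max_eq_left hη1.le, Real.one_rpow, one_mul]
      refine hbd.trans ?_
      have : 0 ≤ η ^ (δ₀ - ν) := Real.rpow_nonneg hη.le _
      nlinarith
  -- the outer integrand bound and its integral
  set c2 : ℝ := 2 * Mf * (cδ + c₀) with hc2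
  have hc2nn : 0 ≤ c2 := by rw [hc2]; positivity
  set Hb : ℝ → ℝ := fun η => c2 * (η ^ (2 * ν - 1) *
      ((min η 1) ^ (δ - ν + 1) * (max η 1) ^ (δ₀ - ν))) with hHb
  have hHbnn : ∀ η : ℝ, 0 ≤ η → 0 ≤ Hb η := by
    intro η hη
    apply mul_nonneg hc2nn
    apply mul_nonneg (Real.rpow_nonneg hη _)
    exact mul_nonneg (Real.rpow_nonneg (le_min hη zero_le_one) _)
      (Real.rpow_nonneg (le_trans zero_le_one (le_max_right η 1)) _)
  have hΦ : ∀ η : ℝ, 0 < η → η ≤ L →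
      |η ^ (2 * ν - 1) * ∫ ξ in η..L, ξ ^ (1 - ν) * F ξ| ≤ Hb η := by
    intro η hη hηL
    rw [abs_mul, abs_of_nonneg (Real.rpow_nonneg hη.le _)]
    calc η ^ (2 * ν - 1) * |∫ ξ in η..L, ξ ^ (1 - ν) * F ξ|
        ≤ η ^ (2 * ν - 1) * (2 * Mf * ((cδ + c₀) *
            ((min η 1) ^ (δ - ν + 1) * (max η 1) ^ (δ₀ - ν)))) :=
          mul_le_mul_of_nonneg_left (hJ η hη hηL) (Real.rpow_nonneg hη.le _)
      _ = Hb η := by simp only [hHb, hc2]; ring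
  have hHb01 : IntervalIntegrable Hb volume 0 1 := by
    have hg : IntervalIntegrable (fun η : ℝ => c2 * η ^ (ν + δ)) volume 0 1 :=
      (intervalIntegral.intervalIntegrable_rpow' (by linarith)).const_mul c2
    rw [intervalIntegrable_iff] at hg ⊢
    apply hg.congr
    rw [Set.uIoc_of_le zero_le_one]
    refine (ae_restrict_iff' measurableSet_Ioc).2 (Eventually.of_forall fun η hη => ?_)
    simp only [hHb]
    simp only [min_eq_left hη.2, max_eq_right hη.2, Real.one_rpow, mul_one]
    rw [← Real.rpow_add hη.1, show ν + δ = 2 * ν - 1 + (δ - ν + 1) by ring]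
  have hHb1L : IntervalIntegrable Hb volume 1 L := by
    apply ContinuousOn.intervalIntegrable
    intro η hη
    rw [Set.uIcc_of_le hL1.le] at hη
    have hη0 : (0:ℝ) < η := lt_of_lt_of_le one_pos hη.1
    apply ContinuousAt.continuousWithinAt
    apply ContinuousAt.mul continuousAt_const
    apply ContinuousAt.mul
    · exact continuousAt_id.rpow_const (Or.inl (ne_of_gt hη0))
    · exact ((continuous_id.min continuous_const).continuousAt.rpow_const
        (Or.inl (ne_of_gt (lt_min hη0 one_pos)))).mul
        ((continuous_id.max continuous_const).continuousAt.rpow_const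
          (Or.inl (ne_of_gt (lt_of_lt_of_le one_pos (le_max_right η 1)))))
  have hHbsub : ∀ t : ℝ, 0 ≤ t → t ≤ L → IntervalIntegrable Hb volume 0 t := by
    intro t h1 h2
    apply (hHb01.trans hHb1L).mono_set
    rw [Set.uIcc_of_le h1, Set.uIcc_of_le (h1.trans h2)]
    exact Set.Icc_subset_Icc le_rfl h2
  have hval1 : ∀ t : ℝ, 0 < t → t ≤ 1 →
      (∫ η in (0:ℝ)..t, Hb η) = c2 * (t ^ (ν + δ + 1) / (ν + δ + 1)) := by
    intro t ht h1
    have hcg : (∫ η in (0:ℝ)..t, Hb η) = ∫ η in (0:ℝ)..t, c2 * η ^ (ν + δ) := by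
      apply intervalIntegral.integral_congr
      intro η hη
      rw [Set.uIcc_of_le ht.le] at hη
      rcases eq_or_lt_of_le hη.1 with h0 | h0
      · rw [← h0]
        simp only [hHb]
        rw [Real.zero_rpow (by intro h; linarith : 2 * ν - 1 ≠ 0),
          Real.zero_rpow (by intro h; linarith : ν + δ ≠ 0)]
        ring
      · simp only [hHb]
        simp only [min_eq_left (hη.2.trans h1), max_eq_right (hη.2.trans h1),
          Real.one_rpow, mul_one]
        rw [← Real.rpow_add h0, show 2 * ν - 1 + (δ - ν + 1) = ν + δ by ring]
    rw [hcg, intervalIntegral.integral_const_mul,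
      integral_rpow (Or.inl (by linarith : (-1:ℝ) < ν + δ)),
      Real.zero_rpow (by intro h; linarith : ν + δ + 1 ≠ 0), sub_zero]
  have hval2 : ∀ t : ℝ, 1 ≤ t → t ≤ L →
      (∫ η in (1:ℝ)..t, Hb η) = c2 * ((t ^ (ν + δ₀) - 1) / (ν + δ₀)) := by
    intro t h1 h2
    have hcg : (∫ η in (1:ℝ)..t, Hb η) = ∫ η in (1:ℝ)..t, c2 * η ^ (ν + δ₀ - 1) := by
      apply intervalIntegral.integral_congr
      intro η hη
      rw [Set.uIcc_of_le h1] at hη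
      have hη0 : (0:ℝ) < η := lt_of_lt_of_le one_pos hη.1
      simp only [hHb]
      simp only [min_eq_right hη.1, max_eq_left hη.1, Real.one_rpow, one_mul]
      rw [← Real.rpow_add hη0, show 2 * ν - 1 + (δ₀ - ν) = ν + δ₀ - 1 by ring]
    rw [hcg, intervalIntegral.integral_const_mul,
      integral_rpow (Or.inl (by linarith : (-1:ℝ) < ν + δ₀ - 1)),
      show ν + δ₀ - 1 + 1 = ν + δ₀ by ring, Real.one_rpow]
  have habs : ∀ t : ℝ, 0 < t → t ≤ L →
      |∫ η in (0:ℝ)..t, η ^ (2 * ν - 1) * ∫ ξ in η..L, ξ ^ (1 - ν) * F ξ| ≤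
        ∫ η in (0:ℝ)..t, Hb η := by
    intro t ht htL
    have hae : ∀ᵐ η ∂(volume.restrict (Set.uIoc 0 t)),
        ‖η ^ (2 * ν - 1) * ∫ ξ in η..L, ξ ^ (1 - ν) * F ξ‖ ≤ Hb η := by
      rw [Set.uIoc_of_le ht.le]
      exact (ae_restrict_iff' measurableSet_Ioc).2 (Eventually.of_forall fun η hη => by
        rw [Real.norm_eq_abs]; exact hΦ η hη.1 (hη.2.trans htL))
    have h := intervalIntegral.norm_integral_le_abs_of_norm_le hae (hHbsub t ht.le htL)
    rw [Real.norm_eq_abs] at h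
    rwa [abs_of_nonneg (intervalIntegral.integral_nonneg ht.le
      fun η hη => hHbnn η hη.1)] at h
  -- notation for the two integrals
  set W : ℝ := (max r 1) ^ δ₀ with hWdef
  have hW1 : 1 ≤ W := by
    rw [hWdef]
    have h := Real.rpow_le_rpow zero_le_one (le_max_right r 1) hδ₀0.le
    rwa [Real.one_rpow] at h
  have hWnn : (0:ℝ) ≤ W := le_trans zero_le_one hW1
  have hinv1 : 1 / (ν + δ + 1) ≤ 1 / ν := one_div_le_one_div_of_le hν0 (by linarith)
  have hinv2 : 1 / (ν + δ₀) ≤ 1 / ν := one_div_le_one_div_of_le hν0 (by linarith)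
  have hinvnn : (0:ℝ) ≤ 1 / ν := by positivity
  have hAbd : |∫ η in (0:ℝ)..L, η ^ (2 * ν - 1) * ∫ ξ in η..L, ξ ^ (1 - ν) * F ξ| ≤
      c2 * (1 / (ν + δ + 1)) + c2 * (L ^ (ν + δ₀) * (1 / (ν + δ₀))) := by
    refine (habs L hL0 le_rfl).trans ?_
    rw [← intervalIntegral.integral_add_adjacent_intervals hHb01 hHb1L,
      hval1 1 one_pos le_rfl, hval2 L hL1.le le_rfl, Real.one_rpow]
    have h2 : c2 * ((L ^ (ν + δ₀) - 1) / (ν + δ₀)) ≤ c2 * (L ^ (ν + δ₀) * (1 / (ν + δ₀))) := by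
      apply mul_le_mul_of_nonneg_left _ hc2nn
      rw [div_le_iff₀ (by linarith : (0:ℝ) < ν + δ₀)]
      have : L ^ (ν + δ₀) * (1 / (ν + δ₀)) * (ν + δ₀) = L ^ (ν + δ₀) := by
        field_simp
      rw [this]; linarith
    linarith [h2]
  -- bound T1
  have hfac : 0 ≤ r ^ ν * L ^ (-(2 * ν)) :=
    mul_nonneg (Real.rpow_nonneg hr0.le _) (Real.rpow_nonneg hL0.le _)
  have key1 : r ^ ν * L ^ (-(2 * ν)) ≤ 1 := by
    calc r ^ ν * L ^ (-(2 * ν)) ≤ L ^ ν * L ^ (-(2 * ν)) :=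
          mul_le_mul_of_nonneg_right (Real.rpow_le_rpow hr0.le hrL (by linarith))
            (Real.rpow_nonneg hL0.le _)
      _ = L ^ (-ν) := by rw [← Real.rpow_add hL0, show ν + -(2 * ν) = -ν by ring]
      _ ≤ 1 := Real.rpow_le_one_of_one_le_of_nonpos hL1.le (by linarith)
  have key2 : r ^ ν * L ^ (-(2 * ν)) * L ^ (ν + δ₀) ≤ W := by
    calc r ^ ν * L ^ (-(2 * ν)) * L ^ (ν + δ₀)
        = r ^ ν * L ^ (δ₀ - ν) := by
          rw [mul_assoc, ← Real.rpow_add hL0, show -(2 * ν) + (ν + δ₀) = δ₀ - ν by ring]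
      _ ≤ r ^ ν * r ^ (δ₀ - ν) := mul_le_mul_of_nonneg_left
          (Real.rpow_le_rpow_of_nonpos hr0 hrL (by linarith))
          (Real.rpow_nonneg hr0.le _)
      _ = r ^ δ₀ := by rw [← Real.rpow_add hr0, show ν + (δ₀ - ν) = δ₀ by ring]
      _ ≤ W := by
          rw [hWdef]; exact Real.rpow_le_rpow hr0.le (le_max_left r 1) hδ₀0.le
  have hT1 : r ^ ν * L ^ (-(2 * ν)) *
      |∫ η in (0:ℝ)..L, η ^ (2 * ν - 1) * ∫ ξ in η..L, ξ ^ (1 - ν) * F ξ| ≤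
      2 * c2 * W / ν := by
    calc r ^ ν * L ^ (-(2 * ν)) *
        |∫ η in (0:ℝ)..L, η ^ (2 * ν - 1) * ∫ ξ in η..L, ξ ^ (1 - ν) * F ξ|
        ≤ r ^ ν * L ^ (-(2 * ν)) *
          (c2 * (1 / (ν + δ + 1)) + c2 * (L ^ (ν + δ₀) * (1 / (ν + δ₀)))) :=
          mul_le_mul_of_nonneg_left hAbd hfac
      _ = c2 * ((r ^ ν * L ^ (-(2 * ν))) * (1 / (ν + δ + 1))) +
          c2 * ((r ^ ν * L ^ (-(2 * ν)) * L ^ (ν + δ₀)) * (1 / (ν + δ₀))) := by ring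
      _ ≤ c2 * (W * (1 / ν)) + c2 * (W * (1 / ν)) := by
          apply add_le_add
          · apply mul_le_mul_of_nonneg_left _ hc2nn
            calc r ^ ν * L ^ (-(2 * ν)) * (1 / (ν + δ + 1)) ≤ 1 * (1 / ν) :=
                  mul_le_mul key1 hinv1 (by positivity) one_pos.le
              _ ≤ W * (1 / ν) := mul_le_mul_of_nonneg_right hW1 hinvnn
          · apply mul_le_mul_of_nonneg_left _ hc2nn
            exact mul_le_mul key2 hinv2 (by positivity)
              hWnn
      _ = 2 * c2 * W / ν := by ring
  -- bound T2
  have hT2 : r ^ (-ν) *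
      |∫ η in (0:ℝ)..r, η ^ (2 * ν - 1) * ∫ ξ in η..L, ξ ^ (1 - ν) * F ξ| ≤
      2 * c2 * W / ν := by
    have hrn : 0 ≤ r ^ (-ν) := Real.rpow_nonneg hr0.le _
    rcases le_or_gt r 1 with hr1 | hr1
    · have hB := (habs r hr0 hrL).trans_eq (hval1 r hr0 hr1)
      have hx : r ^ (δ + 1) ≤ 1 := Real.rpow_le_one hr0.le hr1 (by linarith)
      calc r ^ (-ν) * |∫ η in (0:ℝ)..r, η ^ (2 * ν - 1) * ∫ ξ in η..L, ξ ^ (1 - ν) * F ξ|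
          ≤ r ^ (-ν) * (c2 * (r ^ (ν + δ + 1) / (ν + δ + 1))) :=
            mul_le_mul_of_nonneg_left hB hrn
        _ = c2 * ((r ^ (-ν) * r ^ (ν + δ + 1)) * (1 / (ν + δ + 1))) := by ring
        _ = c2 * (r ^ (δ + 1) * (1 / (ν + δ + 1))) := by
            rw [← Real.rpow_add hr0, show -ν + (ν + δ + 1) = δ + 1 by ring]
        _ ≤ c2 * ((2 * W) * (1 / ν)) := by
            apply mul_le_mul_of_nonneg_left _ hc2nn
            apply mul_le_mul (by linarith) hinv1 (by positivity) (by linarith)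
        _ = 2 * c2 * W / ν := by ring
    · have hsplit : (∫ η in (0:ℝ)..r, Hb η) =
          c2 * (1 / (ν + δ + 1)) + c2 * ((r ^ (ν + δ₀) - 1) / (ν + δ₀)) := by
        have h1r : IntervalIntegrable Hb volume 1 r := by
          apply hHb1L.mono_set
          rw [Set.uIcc_of_le hr1.le, Set.uIcc_of_le hL1.le]
          exact Set.Icc_subset_Icc le_rfl hrL
        rw [← intervalIntegral.integral_add_adjacent_intervals hHb01 h1r,
          hval1 1 one_pos le_rfl, hval2 r hr1.le hrL, Real.one_rpow]
      have hB := (habs r hr0 hrL).trans_eq hsplit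
      have hr1p : (1:ℝ) ≤ r ^ (ν + δ₀) := by
        have h := Real.rpow_le_rpow zero_le_one hr1.le
          (show (0:ℝ) ≤ ν + δ₀ by linarith)
        rwa [Real.one_rpow] at h
      have hrneg : r ^ (-ν) ≤ 1 :=
        Real.rpow_le_one_of_one_le_of_nonpos hr1.le (by linarith)
      have hrd : r ^ (-ν) * r ^ (ν + δ₀) = r ^ δ₀ := by
        rw [← Real.rpow_add hr0, show -ν + (ν + δ₀) = δ₀ by ring]
      have hrW : r ^ δ₀ ≤ W := by
        rw [hWdef]; exact Real.rpow_le_rpow hr0.le (le_max_left r 1) hδ₀0.le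
      calc r ^ (-ν) * |∫ η in (0:ℝ)..r, η ^ (2 * ν - 1) * ∫ ξ in η..L, ξ ^ (1 - ν) * F ξ|
          ≤ r ^ (-ν) * (c2 * (1 / (ν + δ + 1)) + c2 * ((r ^ (ν + δ₀) - 1) / (ν + δ₀))) :=
            mul_le_mul_of_nonneg_left hB hrn
        _ = c2 * (r ^ (-ν) * (1 / (ν + δ + 1))) +
            c2 * ((r ^ (-ν) * (r ^ (ν + δ₀) - 1)) * (1 / (ν + δ₀))) := by ring
        _ ≤ c2 * (W * (1 / ν)) + c2 * (W * (1 / ν)) := by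
            apply add_le_add
            · apply mul_le_mul_of_nonneg_left _ hc2nn
              calc r ^ (-ν) * (1 / (ν + δ + 1)) ≤ 1 * (1 / ν) :=
                    mul_le_mul hrneg hinv1 (by positivity) one_pos.le
                _ ≤ W * (1 / ν) := mul_le_mul_of_nonneg_right hW1 hinvnn
            · apply mul_le_mul_of_nonneg_left _ hc2nn
              have ha : r ^ (-ν) * (r ^ (ν + δ₀) - 1) ≤ W := by
                have : r ^ (-ν) * (r ^ (ν + δ₀) - 1) = r ^ δ₀ - r ^ (-ν) := by
                  rw [mul_sub, hrd, mul_one]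
                rw [this]; linarith [hrW, hrn]
              have hann : 0 ≤ r ^ (-ν) * (r ^ (ν + δ₀) - 1) :=
                mul_nonneg hrn (by linarith)
              exact mul_le_mul ha hinv2 (by positivity) hWnn
        _ = 2 * c2 * W / ν := by ring
  -- final assembly
  have habs3 : ∀ a b : ℝ, |(-a - b)| ≤ |a| + |b| := by
    intro a b
    have h : -a - b = -(a + b) := by ring
    rw [h, abs_neg]
    exact abs_add_le a b
  refine le_trans (habs3 _ _) ?_
  rw [abs_mul (r ^ ν * L ^ (-(2 * ν))) _, abs_mul (r ^ (-ν)) _,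
    abs_of_nonneg hfac, abs_of_nonneg (Real.rpow_nonneg hr0.le (-ν))]
  calc r ^ ν * L ^ (-(2 * ν)) *
        |∫ η in (0:ℝ)..L, η ^ (2 * ν - 1) * ∫ ξ in η..L, ξ ^ (1 - ν) * F ξ| +
      r ^ (-ν) * |∫ η in (0:ℝ)..r, η ^ (2 * ν - 1) * ∫ ξ in η..L, ξ ^ (1 - ν) * F ξ|
      ≤ 2 * c2 * W / ν + 2 * c2 * W / ν := add_le_add hT1 hT2
    _ = 8 * Mf * (cδ + c₀) * W / ν := by rw [hc2]; ring
end Rm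


set_option maxHeartbeats 2000000 in
/-- Lemma A.1: the series `I₁ = Σ_{m≥1} R_{m0}(r) cos(√μ_m(θ − θ₀))` converges absolutely and
`‖I₁‖^{(0,−δ₀)}_{0;Q_L} ≤ C‖f‖^{(1−δ,2−δ₀)}_{0,α;Q}` with `C` independent of `L` and `f`. -/
theorem stmt17 (b₀ δ δ₀ : ℝ) (hb₀ : 0 < b₀)
    (hδ0 : 0 < δ) (hδ1 : δ < 1) (hδ₀0 : 0 < δ₀) (hδ₀1 : δ₀ < 1) :
    ∃ C : ℝ, 0 < C ∧
      ∀ α : ℝ, 0 < α → α < 1 →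
      ∀ L : ℝ, 4 ≤ L →
      ∀ (f : V3 → ℝ) (Mf : ℝ), 0 ≤ Mf →
        ContinuousOn f (SQ b₀) →
        wnormLE (SQ b₀) 0 α (1 - δ) (2 - δ₀) (wedgeQ b₀) f Mf →
        Per2On (closure (wedgeQ b₀)) f →
        (∀ r : ℝ, 0 < r → r ≤ L →
            Summable fun m : ℕ => |Rm0 b₀ L f (m + 1) r|) ∧
        (∀ r θ : ℝ, 0 < r → r ≤ 1 → Real.arctan b₀ ≤ θ → θ ≤ Real.pi / 2 →
            |∑' m : ℕ, Rm0 b₀ L f (m + 1) r *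
                Real.cos (sqrtmu b₀ (m + 1) * (θ - Real.arctan b₀))| ≤ C * Mf) ∧
        (∀ r θ : ℝ, 1 < r → r ≤ L → Real.arctan b₀ ≤ θ → θ ≤ Real.pi / 2 →
            r ^ (-δ₀) * |∑' m : ℕ, Rm0 b₀ L f (m + 1) r *
                Real.cos (sqrtmu b₀ (m + 1) * (θ - Real.arctan b₀))| ≤ C * Mf) := by
  -- geometric constants
  have hθ₀pos : 0 < Real.arctan b₀ := by
    have h := Real.arctan_strictMono hb₀; rwa [Real.arctan_zero] at h
  have hθ₀lt : Real.arctan b₀ < Real.pi / 2 := Real.arctan_lt_pi_div_two b₀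
  set β : ℝ := Real.pi / 2 - Real.arctan b₀ with hβ
  have hβpos : 0 < β := by rw [hβ]; linarith
  set ν1 : ℝ := Real.pi / β with hν1def
  have hν1 : 2 < ν1 := by
    rw [hν1def, lt_div_iff₀ hβpos, hβ]
    linarith [Real.pi_pos]
  have hsm : ∀ m : ℕ, sqrtmu b₀ m = m * ν1 := by
    intro m; rw [sqrtmu, hν1def, hβ]; ring
  set K : ℝ := 8 / (ν1 - 2) with hK
  have hKpos : 0 < K := by rw [hK]; exact div_pos (by norm_num) (by linarith)
  set S : ℝ := ∑' m : ℕ, 1 / ((m:ℝ) + 1) ^ 2 with hS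
  have hSsum : Summable (fun m : ℕ => 1 / ((m:ℝ) + 1) ^ 2) := by
    have h := (summable_one_div_nat_pow (p := 2)).2 one_lt_two
    have h2 := (summable_nat_add_iff (f := fun n : ℕ => 1 / (n:ℝ) ^ 2) 1).2 h
    apply h2.congr
    intro n; push_cast; ring
  have hSnn : 0 ≤ S := tsum_nonneg fun m => by positivity
  refine ⟨K * S + 1, by nlinarith [mul_nonneg hKpos.le hSnn], ?_⟩
  intro α hα0 hα1 L hL f Mf hMf hc hw hper
  have hfb := fbound hδ1 hδ₀1 hc hw.1
  have hL0 : (0:ℝ) < L := by linarith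
  -- the key per-mode estimate
  have key : ∀ m : ℕ, 1 ≤ m → ∀ r : ℝ, 0 < r → r ≤ L →
      |Rm0 b₀ L f m r| ≤ K * Mf * (max r 1) ^ δ₀ * (1 / ((m:ℝ)) ^ 2) := by
    intro m hm r hr0 hrL
    have hm1 : (1:ℝ) ≤ (m:ℝ) := by exact_mod_cast hm
    have hν2m : 2 * (m:ℝ) ≤ sqrtmu b₀ m := by
      rw [hsm]; nlinarith
    have hν : 2 < sqrtmu b₀ m := by
      rw [hsm]; nlinarith
    have haux := Rm0_bound_aux hδ0 hδ1 hδ₀0 hδ₀1 hMf hν hL (fm0 b₀ f m)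
      (fun ξ hξ => fm0_bound hb₀ hMf hfb m hξ) hr0 hrL
    rw [Rm0]
    refine haux.trans ?_
    set ν : ℝ := sqrtmu b₀ m with hνdef
    have hνm : ν = (m:ℝ) * ν1 := hsm m
    have hWnn : 0 ≤ (max r 1) ^ δ₀ :=
      Real.rpow_nonneg (le_trans zero_le_one (le_max_right r 1)) _
    have hmo : (0:ℝ) < (m:ℝ) := by linarith
    have hden : (0:ℝ) < (m:ℝ) * (ν1 - 2) := mul_pos hmo (by linarith)
    have e1 : (m:ℝ) * (ν1 - 2) ≤ ν - δ - 1 := by rw [hνm]; nlinarith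
    have e2 : (m:ℝ) * (ν1 - 2) ≤ ν - δ₀ := by rw [hνm]; nlinarith
    have h1 : 1 / (ν - δ - 1) + 1 / (ν - δ₀) ≤ 2 / ((m:ℝ) * (ν1 - 2)) := by
      have a1 := one_div_le_one_div_of_le hden e1
      have a2 := one_div_le_one_div_of_le hden e2
      have : 2 / ((m:ℝ) * (ν1 - 2)) = 1 / ((m:ℝ) * (ν1 - 2)) + 1 / ((m:ℝ) * (ν1 - 2)) := by
        ring
      rw [this]; exact add_le_add a1 a2
    have h2 : 1 / ν ≤ 1 / (2 * (m:ℝ)) :=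
      one_div_le_one_div_of_le (by positivity) hν2m
    have hsumnn : 0 ≤ 1 / (ν - δ - 1) + 1 / (ν - δ₀) := by
      have hp1 : (0:ℝ) < ν - δ - 1 := by linarith
      have hp2 : (0:ℝ) < ν - δ₀ := by linarith
      positivity
    calc 8 * Mf * (1 / (ν - δ - 1) + 1 / (ν - δ₀)) * (max r 1) ^ δ₀ / ν
        = (8 * Mf * (max r 1) ^ δ₀) * ((1 / (ν - δ - 1) + 1 / (ν - δ₀)) * (1 / ν)) := by
          ring
      _ ≤ (8 * Mf * (max r 1) ^ δ₀) * ((2 / ((m:ℝ) * (ν1 - 2))) * (1 / (2 * (m:ℝ)))) := by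
          have hνpos : (0:ℝ) < ν := by linarith
          apply mul_le_mul_of_nonneg_left _
            (mul_nonneg (mul_nonneg (by norm_num) hMf) hWnn)
          exact mul_le_mul h1 h2 (le_of_lt (one_div_pos.2 hνpos))
            (le_of_lt (div_pos two_pos hden))
      _ = K * Mf * (max r 1) ^ δ₀ * (1 / ((m:ℝ)) ^ 2) := by
          rw [hK]
          have hm0 : (m:ℝ) ≠ 0 := ne_of_gt hmo
          have hv2 : ν1 - 2 ≠ 0 := by intro h; rw [sub_eq_zero] at h; linarith
          field_simp
  -- per-r machinery
  have master : ∀ r : ℝ, 0 < r → r ≤ L →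
      (Summable fun m : ℕ => |Rm0 b₀ L f (m + 1) r|) ∧
      ∀ θ : ℝ, |∑' m : ℕ, Rm0 b₀ L f (m + 1) r *
          Real.cos (sqrtmu b₀ (m + 1) * (θ - Real.arctan b₀))| ≤
        K * Mf * (max r 1) ^ δ₀ * S := by
    intro r hr0 hrL
    set W : ℝ := (max r 1) ^ δ₀ with hW
    have hWnn : 0 ≤ W := Real.rpow_nonneg (le_trans zero_le_one (le_max_right r 1)) _
    have hbnd : ∀ m : ℕ, |Rm0 b₀ L f (m + 1) r| ≤ K * Mf * W * (1 / ((m:ℝ) + 1) ^ 2) := by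
      intro m
      have h := key (m + 1) (Nat.le_add_left 1 m) r hr0 hrL
      have hcast : ((m + 1 : ℕ) : ℝ) = (m:ℝ) + 1 := by push_cast; ring
      rwa [hcast] at h
    have hgsum : Summable (fun m : ℕ => K * Mf * W * (1 / ((m:ℝ) + 1) ^ 2)) :=
      hSsum.mul_left (K * Mf * W)
    have hsum1 : Summable fun m : ℕ => |Rm0 b₀ L f (m + 1) r| :=
      Summable.of_nonneg_of_le (fun m => abs_nonneg _) hbnd hgsum
    refine ⟨hsum1, ?_⟩
    intro θ
    have hcos : ∀ m : ℕ, |Rm0 b₀ L f (m + 1) r *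
        Real.cos (sqrtmu b₀ (m + 1) * (θ - Real.arctan b₀))| ≤
        K * Mf * W * (1 / ((m:ℝ) + 1) ^ 2) := by
      intro m
      rw [abs_mul]
      calc |Rm0 b₀ L f (m + 1) r| * |Real.cos (sqrtmu b₀ (m + 1) * (θ - Real.arctan b₀))|
          ≤ |Rm0 b₀ L f (m + 1) r| * 1 :=
            mul_le_mul_of_nonneg_left (Real.abs_cos_le_one _) (abs_nonneg _)
        _ = |Rm0 b₀ L f (m + 1) r| := mul_one _
        _ ≤ K * Mf * W * (1 / ((m:ℝ) + 1) ^ 2) := hbnd m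
    have hsumcos : Summable fun m : ℕ => ‖Rm0 b₀ L f (m + 1) r *
        Real.cos (sqrtmu b₀ (m + 1) * (θ - Real.arctan b₀))‖ := by
      apply Summable.of_nonneg_of_le (fun m => norm_nonneg _) _ hgsum
      intro m; rw [Real.norm_eq_abs]; exact hcos m
    calc |∑' m : ℕ, Rm0 b₀ L f (m + 1) r *
          Real.cos (sqrtmu b₀ (m + 1) * (θ - Real.arctan b₀))|
        ≤ ∑' m : ℕ, ‖Rm0 b₀ L f (m + 1) r *
            Real.cos (sqrtmu b₀ (m + 1) * (θ - Real.arctan b₀))‖ := by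
          have h := norm_tsum_le_tsum_norm hsumcos
          rwa [Real.norm_eq_abs] at h
      _ ≤ ∑' m : ℕ, K * Mf * W * (1 / ((m:ℝ) + 1) ^ 2) := by
          apply Summable.tsum_le_tsum _ hsumcos hgsum
          intro m; rw [Real.norm_eq_abs]; exact hcos m
      _ = K * Mf * W * S := by rw [hS, tsum_mul_left]
  refine ⟨fun r hr0 hrL => (master r hr0 hrL).1, ?_, ?_⟩
  · -- small r
    intro r θ hr0 hr1 hθ1 hθ2
    have h := (master r hr0 (by linarith)).2 θ
    rw [max_eq_right hr1, Real.one_rpow, mul_one] at h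
    refine h.trans ?_
    have : (K * S + 1) * Mf = K * S * Mf + Mf := by ring
    rw [this]
    have : K * Mf * S = K * S * Mf := by ring
    rw [this]
    linarith
  · -- large r
    intro r θ hr1 hrL hθ1 hθ2
    have hr0 : 0 < r := by linarith
    have h := (master r hr0 hrL).2 θ
    rw [max_eq_left hr1.le] at h
    have hrn : 0 ≤ r ^ (-δ₀) := Real.rpow_nonneg hr0.le _
    calc r ^ (-δ₀) * |∑' m : ℕ, Rm0 b₀ L f (m + 1) r *
          Real.cos (sqrtmu b₀ (m + 1) * (θ - Real.arctan b₀))|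
        ≤ r ^ (-δ₀) * (K * Mf * r ^ δ₀ * S) := mul_le_mul_of_nonneg_left h hrn
      _ = K * Mf * S * (r ^ (-δ₀) * r ^ δ₀) := by ring
      _ = K * Mf * S := by
          rw [← Real.rpow_add hr0, neg_add_cancel, Real.rpow_zero, mul_one]
      _ ≤ (K * S + 1) * Mf := by nlinarith
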